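/- Let T_α be the Bellman optimality operator of a finite discounted MDP and let γ := max over all pairs of state-action pairs ((x,a),(y,b)) with a ∈ A x and b ∈ A y of (1 − ∑_z min(p x a z, p y b z)). Assume α ∈ (0,1), γ ∈ (0,1], ε > 0, and S := sp(T_α v⁰ − v⁰) > 0 for the initial vector v⁰ : Fin m → ℝ. Then for every natural number n with n ≥ max{⌈log((1−α)·ε·γ/S) / log(α·γ)⌉, 1}, the value iterates satisfy sp(T_α^n v⁰ − T_α^{n−1} v⁰) ≤ (1−α)·ε/α. (Theorem 1: the value iteration algorithm with span stopping rule terminates within max{⌈log((1−α)εγ/S)/log(αγ)⌉,1} iterations.) -/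
import Mathlib

open Finset

/-- Span seminorm `sp(u) = max_x u(x) - min_x u(x)` on `Fin m → ℝ`. -/
noncomputable def sp {m : ℕ} [NeZero m] (u : Fin m → ℝ) : ℝ :=
  (univ.sup' univ_nonempty u) - (univ.inf' univ_nonempty u)

lemma sp_nonneg {m : ℕ} [NeZero m] (u : Fin m → ℝ) : 0 ≤ sp u := by
  have x : Fin m := Classical.arbitrary _
  have h1 : univ.inf' univ_nonempty u ≤ u x := inf'_le _ (mem_univ x)
  have h2 : u x ≤ univ.sup' univ_nonempty u := le_sup' _ (mem_univ x)
  unfold sp; linarith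

lemma key_ineq {m : ℕ} [NeZero m] (p1 p2 : Fin m → ℝ)
    (hs1 : ∑ z, p1 z = 1) (hs2 : ∑ z, p2 z = 1) (w : Fin m → ℝ) :
    ∑ z, p1 z * w z - ∑ z, p2 z * w z ≤ (1 - ∑ z, min (p1 z) (p2 z)) * sp w := by
  set M := univ.sup' univ_nonempty w with hM
  set mn := univ.inf' univ_nonempty w with hmn
  have h1 : ∑ z, p1 z * w z - ∑ z, (min (p1 z) (p2 z)) * w z ≤ (1 - ∑ z, min (p1 z) (p2 z)) * M := by
    rw [← Finset.sum_sub_distrib]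
    have : (1 - ∑ z, min (p1 z) (p2 z)) * M = ∑ z, (p1 z - min (p1 z) (p2 z)) * M := by
      rw [← Finset.sum_mul, Finset.sum_sub_distrib, hs1]
    rw [this]
    apply Finset.sum_le_sum
    intro z _
    rw [← sub_mul]
    exact mul_le_mul_of_nonneg_left (le_sup' _ (mem_univ z)) (by simp [min_le_left])
  have h2 : (1 - ∑ z, min (p1 z) (p2 z)) * mn ≤ ∑ z, p2 z * w z - ∑ z, (min (p1 z) (p2 z)) * w z := by
    rw [← Finset.sum_sub_distrib]
    have : (1 - ∑ z, min (p1 z) (p2 z)) * mn = ∑ z, (p2 z - min (p1 z) (p2 z)) * mn := by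
      rw [← Finset.sum_mul, Finset.sum_sub_distrib, hs2]
    rw [this]
    apply Finset.sum_le_sum
    intro z _
    rw [← sub_mul]
    exact mul_le_mul_of_nonneg_left (inf'_le _ (mem_univ z)) (by simp [min_le_right])
  have hsp : sp w = M - mn := rfl
  rw [hsp]; nlinarith [h1, h2]

/-- Bellman optimality operator of a finite discounted MDP. -/
noncomputable def bellman {m K : ℕ} (A : Fin m → Finset (Fin K))
    (hA : ∀ x, (A x).Nonempty) (r : Fin m → Fin K → ℝ)
    (p : Fin m → Fin K → Fin m → ℝ) (α : ℝ) (v : Fin m → ℝ) : Fin m → ℝ :=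
  fun x => (A x).sup' (hA x) (fun a => r x a + α * ∑ y, p x a y * v y)

lemma contraction {m K : ℕ} [NeZero m] (A : Fin m → Finset (Fin K))
    (hA : ∀ x, (A x).Nonempty) (r : Fin m → Fin K → ℝ)
    (p : Fin m → Fin K → Fin m → ℝ)
    (hp1 : ∀ x a, a ∈ A x → ∑ y, p x a y = 1)
    (α γ : ℝ) (hα0 : 0 < α)
    (hγub : ∀ x y a b, a ∈ A x → b ∈ A y →
      1 - ∑ z, min (p x a z) (p y b z) ≤ γ)
    (u v : Fin m → ℝ) :
    sp (bellman A hA r p α u - bellman A hA r p α v) ≤ α * γ * sp (u - v) := by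
  obtain ⟨x, -, hx⟩ := exists_mem_eq_sup' (univ_nonempty (α := Fin m))
      (bellman A hA r p α u - bellman A hA r p α v)
  obtain ⟨y, -, hy⟩ := exists_mem_eq_inf' (univ_nonempty (α := Fin m))
      (bellman A hA r p α u - bellman A hA r p α v)
  obtain ⟨a, ha, hax⟩ := exists_mem_eq_sup' (hA x)
      (fun a => r x a + α * ∑ z, p x a z * u z)
  obtain ⟨b, hb, hby⟩ := exists_mem_eq_sup' (hA y)
      (fun b => r y b + α * ∑ z, p y b z * v z)
  have hTux : bellman A hA r p α u x = r x a + α * ∑ z, p x a z * u z := hax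
  have hTvx : r x a + α * ∑ z, p x a z * v z ≤ bellman A hA r p α v x :=
    le_sup' (fun a => r x a + α * ∑ z, p x a z * v z) ha
  have hTvy : bellman A hA r p α v y = r y b + α * ∑ z, p y b z * v z := hby
  have hTuy : r y b + α * ∑ z, p y b z * u z ≤ bellman A hA r p α u y :=
    le_sup' (fun b => r y b + α * ∑ z, p y b z * u z) hb
  have hkey : (∑ z, p x a z * (u - v) z) - (∑ z, p y b z * (u - v) z) ≤
      (1 - ∑ z, min (p x a z) (p y b z)) * sp (u - v) :=
    key_ineq _ _ (hp1 x a ha) (hp1 y b hb) _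
  have hβγ : 1 - ∑ z, min (p x a z) (p y b z) ≤ γ := hγub x y a b ha hb
  have hspnn := sp_nonneg (u - v)
  have hsum1 : ∑ z, p x a z * (u - v) z = (∑ z, p x a z * u z) - ∑ z, p x a z * v z := by
    rw [← Finset.sum_sub_distrib]; apply Finset.sum_congr rfl; intro z _
    simp [Pi.sub_apply]; ring
  have hsum2 : ∑ z, p y b z * (u - v) z = (∑ z, p y b z * u z) - ∑ z, p y b z * v z := by
    rw [← Finset.sum_sub_distrib]; apply Finset.sum_congr rfl; intro z _
    simp [Pi.sub_apply]; ring
  have hspeq : sp (bellman A hA r p α u - bellman A hA r p α v) =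
      (bellman A hA r p α u x - bellman A hA r p α v x) -
      (bellman A hA r p α u y - bellman A hA r p α v y) := by
    unfold sp; rw [hx, hy]; simp [Pi.sub_apply]
  rw [hspeq]
  have h1 : bellman A hA r p α u x - bellman A hA r p α v x ≤
      α * ((∑ z, p x a z * u z) - ∑ z, p x a z * v z) := by
    rw [hTux]; nlinarith [hTvx]
  have h2 : α * ((∑ z, p y b z * u z) - ∑ z, p y b z * v z) ≤
      bellman A hA r p α u y - bellman A hA r p α v y := by
    rw [hTvy]; nlinarith [hTuy]
  have hmono : (1 - ∑ z, min (p x a z) (p y b z)) * sp (u - v) ≤ γ * sp (u - v) :=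
    mul_le_mul_of_nonneg_right hβγ hspnn
  rw [hsum1, hsum2] at hkey
  nlinarith [hkey]

theorem stmt0 {m K : ℕ} [NeZero m] (A : Fin m → Finset (Fin K))
    (hA : ∀ x, (A x).Nonempty) (r : Fin m → Fin K → ℝ)
    (p : Fin m → Fin K → Fin m → ℝ)
    (hp0 : ∀ x a y, a ∈ A x → 0 ≤ p x a y)
    (hp1 : ∀ x a, a ∈ A x → ∑ y, p x a y = 1)
    (α γ ε : ℝ) (hα0 : 0 < α) (hα1 : α < 1)
    (hγ0 : 0 < γ) (hγ1 : γ ≤ 1) (hε : 0 < ε)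
    (hγdef : IsGreatest {g : ℝ | ∃ x y a b, a ∈ A x ∧ b ∈ A y ∧
        g = 1 - ∑ z, min (p x a z) (p y b z)} γ)
    (v0 : Fin m → ℝ)
    (hS : 0 < sp (bellman A hA r p α v0 - v0))
    (n : ℕ)
    (hn : max ⌈Real.log ((1 - α) * ε * γ / sp (bellman A hA r p α v0 - v0)) /
        Real.log (α * γ)⌉ 1 ≤ (n : ℤ)) :
    sp ((bellman A hA r p α)^[n] v0 - (bellman A hA r p α)^[n - 1] v0) ≤
      (1 - α) * ε / α := by
  set T := bellman A hA r p α with hT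
  set S := sp (T v0 - v0) with hSdef
  set c := α * γ with hc
  have hγub : ∀ x y a b, a ∈ A x → b ∈ A y →
      1 - ∑ z, min (p x a z) (p y b z) ≤ γ := fun x y a b ha hb =>
    hγdef.2 ⟨x, y, a, b, ha, hb, rfl⟩
  have hcontr : ∀ u v, sp (T u - T v) ≤ c * sp (u - v) :=
    contraction A hA r p hp1 α γ hα0 hγub
  have hc0 : 0 < c := mul_pos hα0 hγ0
  have hc1 : c < 1 := lt_of_le_of_lt (by nlinarith) hα1
  have hiter : ∀ k : ℕ, sp (T^[k+1] v0 - T^[k] v0) ≤ c ^ k * S := by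
    intro k
    induction k with
    | zero => simp [hSdef]
    | succ k ih =>
      have h1 : T^[k+1+1] v0 = T (T^[k+1] v0) := Function.iterate_succ_apply' T _ v0
      have h2 : T^[k+1] v0 = T (T^[k] v0) := Function.iterate_succ_apply' T _ v0
      calc sp (T^[k+1+1] v0 - T^[k+1] v0)
          = sp (T (T^[k+1] v0) - T (T^[k] v0)) := by rw [h1]; nth_rewrite 2 [h2]; rfl
        _ ≤ c * sp (T^[k+1] v0 - T^[k] v0) := hcontr _ _
        _ ≤ c * (c ^ k * S) := mul_le_mul_of_nonneg_left ih hc0.le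
        _ = c ^ (k+1) * S := by ring
  have hn1 : 1 ≤ n := by exact_mod_cast le_trans (le_max_right _ 1) hn
  have hceil : ⌈Real.log ((1 - α) * ε * γ / S) / Real.log c⌉ ≤ (n : ℤ) :=
    le_trans (le_max_left _ 1) hn
  have hdiv : Real.log ((1 - α) * ε * γ / S) / Real.log c ≤ (n : ℝ) := by
    have := Int.ceil_le.mp hceil
    exact_mod_cast this
  have hlogc : Real.log c < 0 := Real.log_neg hc0 hc1
  have hX : (0:ℝ) < (1 - α) * ε * γ / S := by
    have h1α : 0 < 1 - α := by linarith
    positivity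
  have hmul : (n : ℝ) * Real.log c ≤ Real.log ((1 - α) * ε * γ / S) := by
    rw [div_le_iff_of_neg hlogc] at hdiv
    linarith
  have hpow : c ^ n ≤ (1 - α) * ε * γ / S := by
    have h1 : c ^ n = Real.exp ((n : ℝ) * Real.log c) := by
      rw [← Real.log_pow, Real.exp_log (pow_pos hc0 n)]
    rw [h1, ← Real.exp_log hX]
    exact Real.exp_le_exp.mpr hmul
  have hnk : n = (n - 1) + 1 := (Nat.succ_pred_eq_of_pos hn1).symm
  have hfin := hiter (n - 1)
  rw [← hnk] at hfin
  have hcn : c ^ n = c ^ (n - 1) * c := by conv_lhs => rw [hnk, pow_succ]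
  rw [hcn] at hpow
  have ht : 0 ≤ c ^ (n - 1) := (pow_pos hc0 _).le
  calc sp (T^[n] v0 - T^[n-1] v0) ≤ c ^ (n-1) * S := hfin
    _ ≤ (1 - α) * ε / α := by
        rw [hc] at hpow
        rw [le_div_iff₀ hα0]
        have h5 : (α * γ) ^ (n-1) * (α * γ) * S ≤ (1 - α) * ε * γ := by
          have h := mul_le_mul_of_nonneg_right hpow hS.le
          rwa [div_mul_cancel₀ _ hS.ne'] at h
        have h6 : ((α*γ) ^ (n-1) * S * α) * γ ≤ ((1 - α) * ε) * γ := by nlinarith [h5]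
        have h7 := le_of_mul_le_mul_right h6 hγ0
        calc c ^ (n-1) * S * α = (α*γ) ^ (n-1) * S * α := by rw [hc]
          _ ≤ (1 - α) * ε := h7
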